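/- Let ω = e^{2πi/3}, Λ = ℤω ⊕ ℤ and ⟨z,w⟩ := Re(z·conj(w)). Suppose k ∈ ℂ and W : ℂ → ℂ is continuously differentiable, Λ-periodic (W(z+γ) = W(z) for all γ ∈ Λ), and satisfies 2D_{z̄}W + 2kW = 0 on ℂ. If W(z₁) = 0 for some z₁ ∈ ℂ, then W is identically zero. -/

import Mathlib

open Complex

noncomputable section

/-- `ω = e^{2πi/3}`. -/
def ω : ℂ := Complex.exp (2 * (Real.pi : ℂ) * Complex.I / 3)

/-- The hexagonal lattice `Λ = ℤω ⊕ ℤ`. -/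
def inΛ (γ : ℂ) : Prop := ∃ m n : ℤ, γ = (m : ℂ) * ω + (n : ℂ)

/-- `2 D_{z̄} u = -i (∂_x u + i ∂_y u)`. -/
def Dbar2 (u : ℂ → ℂ) : ℂ → ℂ := fun z =>
  -Complex.I * (fderiv ℝ u z 1 + Complex.I * fderiv ℝ u z Complex.I)

lemma clm_ext_complex (M N : ℂ →L[ℝ] ℂ) (h1 : M 1 = N 1)
    (hI : M Complex.I = N Complex.I) : M = N := by
  ext z
  have hz : z = z.re • (1:ℂ) + z.im • Complex.I := by
    simp [Complex.real_smul]
  rw [hz, map_add, map_add, map_smul, map_smul, map_smul, map_smul, h1, hI]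

theorem stmt9 (k : ℂ) (W : ℂ → ℂ) (hW : ContDiff ℝ 1 W)
    (hper : ∀ γ : ℂ, inΛ γ → ∀ z : ℂ, W (z + γ) = W z)
    (heq : ∀ z : ℂ, Dbar2 W z + 2 * k * W z = 0)
    (z₁ : ℂ) (hz₁ : W z₁ = 0) :
    ∀ z : ℂ, W z = 0 := by
  classical
  set φ : ℂ →L[ℝ] ℂ :=
    (Complex.I * k) • (Complex.conjCLE : ℂ ≃L[ℝ] ℂ).toContinuousLinearMap
      + (Complex.I * (starRingEnd ℂ) k) • (ContinuousLinearMap.id ℝ ℂ) with hφdef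
  have hφ1 : φ 1 = Complex.I * k + Complex.I * (starRingEnd ℂ) k := by
    simp [hφdef]
  have hφI : φ Complex.I = Complex.I * k * (-Complex.I)
      + Complex.I * (starRingEnd ℂ) k * Complex.I := by
    simp [hφdef, Complex.conj_I]
  set g : ℂ → ℂ := fun z => Complex.exp (φ z) * W z with hgdef
  -- g is entire
  have hgdiff : Differentiable ℂ g := by
    intro z
    have hA : HasFDerivAt W (fderiv ℝ W z) z := (hW.differentiable one_ne_zero z).hasFDerivAt
    have hE : HasFDerivAt (fun w : ℂ => Complex.exp (φ w))
        ((((1 : ℂ →L[ℂ] ℂ).smulRight (Complex.exp (φ z))).restrictScalars ℝ).comp φ) z :=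
      ((Complex.hasDerivAt_exp (φ z)).hasFDerivAt.restrictScalars ℝ).comp z φ.hasFDerivAt
    have hg : HasFDerivAt g
        (Complex.exp (φ z) • fderiv ℝ W z + W z •
          ((((1 : ℂ →L[ℂ] ℂ).smulRight (Complex.exp (φ z))).restrictScalars ℝ).comp φ)) z :=
      hE.mul hA
    set M := Complex.exp (φ z) • fderiv ℝ W z + W z •
          ((((1 : ℂ →L[ℂ] ℂ).smulRight (Complex.exp (φ z))).restrictScalars ℝ).comp φ) with hM
    -- Cauchy-Riemann from the equation
    have hB : fderiv ℝ W z Complex.I = Complex.I * fderiv ℝ W z 1 - 2 * k * W z := by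
      have h := heq z
      simp only [Dbar2] at h
      linear_combination h + (fderiv ℝ W z Complex.I) * Complex.I_mul_I
    have hM1 : M 1 = Complex.exp (φ z) * fderiv ℝ W z 1
        + W z * ((Complex.I * k + Complex.I * (starRingEnd ℂ) k) * Complex.exp (φ z)) := by
      simp [hM, hφ1]
    have hMI : M Complex.I = Complex.I * M 1 := by
      have hMIa : M Complex.I = Complex.exp (φ z) * fderiv ℝ W z Complex.I
          + W z * ((Complex.I * k * (-Complex.I)
            + Complex.I * (starRingEnd ℂ) k * Complex.I) * Complex.exp (φ z)) := by
        simp [hM, hφI]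
      rw [hMIa, hM1]
      linear_combination (Complex.exp (φ z)) * hB
        - 2 * k * W z * Complex.exp (φ z) * Complex.I_mul_I
    have : HasFDerivAt g ((M 1) • (ContinuousLinearMap.id ℂ ℂ)) z := by
      refine hasFDerivAt_of_restrictScalars ℝ hg ?_
      refine clm_ext_complex _ _ ?_ ?_
      · simp
      · simp [hMI, mul_comm]
    exact this.differentiableAt
  -- boundedness of W
  have hωim : 0 < ω.im := by
    have hω : ω = Complex.exp (((2 * Real.pi / 3 : ℝ) : ℂ) * Complex.I) := by
      unfold ω; push_cast; ring_nf
    rw [hω, Complex.exp_ofReal_mul_I_im]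
    exact Real.sin_pos_of_pos_of_lt_pi (by positivity)
      (by nlinarith [Real.pi_pos])
  set K : Set ℂ := (fun p : ℝ × ℝ => (p.1 : ℂ) * ω + (p.2 : ℂ)) ''
      (Set.Icc (0:ℝ) 1 ×ˢ Set.Icc (0:ℝ) 1) with hK
  have hKc : IsCompact K := by
    apply (isCompact_Icc.prod isCompact_Icc).image
    fun_prop
  obtain ⟨C, hC⟩ := hKc.exists_bound_of_continuousOn (hW.continuous.continuousOn (s := K))
  have hWb : ∀ z : ℂ, ‖W z‖ ≤ C := by
    intro z
    set a : ℝ := z.im / ω.im with ha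
    set b : ℝ := z.re - a * ω.re with hb
    have hz : z = (a : ℂ) * ω + (b : ℂ) := by
      apply Complex.ext
      · simp [Complex.add_re, Complex.mul_re, hb]
      · simp only [Complex.add_im, Complex.mul_im, Complex.ofReal_re, Complex.ofReal_im, zero_mul, add_zero, ha]
        rw [div_mul_cancel₀ _ hωim.ne']
    have hmem : z - ((⌊a⌋ : ℂ) * ω + (⌊b⌋ : ℂ)) ∈ K := by
      refine ⟨(Int.fract a, Int.fract b), ⟨⟨Int.fract_nonneg a, (Int.fract_lt_one a).le⟩,
        ⟨Int.fract_nonneg b, (Int.fract_lt_one b).le⟩⟩, ?_⟩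
      simp only [Int.fract]
      push_cast
      rw [hz]; ring
    have hWeq : W z = W (z - ((⌊a⌋ : ℂ) * ω + (⌊b⌋ : ℂ))) := by
      have := hper ((⌊a⌋ : ℂ) * ω + (⌊b⌋ : ℂ)) ⟨⌊a⌋, ⌊b⌋, rfl⟩
        (z - ((⌊a⌋ : ℂ) * ω + (⌊b⌋ : ℂ)))
      rw [sub_add_cancel] at this
      exact this
    rw [hWeq]
    exact hC _ hmem
  -- |exp (φ z)| = 1
  have hexp1 : ∀ z : ℂ, ‖Complex.exp (φ z)‖ = 1 := by
    intro z
    have hre : (φ z).re = 0 := by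
      have : φ z = Complex.I * (k * (starRingEnd ℂ) z)
          + Complex.I * ((starRingEnd ℂ) k * z) := by
        simp [hφdef]; ring
      rw [this]
      simp [Complex.add_re, Complex.mul_re, Complex.mul_im, Complex.conj_re, Complex.conj_im]
      ring
    rw [Complex.norm_exp, hre, Real.exp_zero]
  -- g is bounded
  have hgb : Bornology.IsBounded (Set.range g) := by
    rw [isBounded_iff_forall_norm_le]
    refine ⟨C, ?_⟩
    rintro _ ⟨z, rfl⟩
    have : ‖g z‖ = ‖W z‖ := by
      simp only [hgdef, norm_mul, hexp1 z, one_mul]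
    rw [this]
    exact hWb z
  intro z
  have hz : g z = g z₁ := hgdiff.apply_eq_apply_of_bounded hgb z z₁
  have hz1 : g z₁ = 0 := by simp [hgdef, hz₁]
  have hgz : Complex.exp (φ z) * W z = 0 := hz.trans hz1
  exact (mul_eq_zero.mp hgz).resolve_left (Complex.exp_ne_zero _)

end
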